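/- Let π be a closed continuous surjective map from a metric space X onto a topological space Y. If the boundary of π⁻¹(y) is compact for every y ∈ Y, then Y is metrizable. -/

import Mathlib

open scoped BigOperators

universe u

variable {X : Type u}

def sepSetoid [TopologicalSpace X] (A : Subalgebra ℝ C(X, ℝ)) : Setoid X :=
  ⟨fun a b => ∀ f ∈ A, f a = f b,
   ⟨fun _ _ _ => rfl, fun h f hf => (h f hf).symm, fun h1 h2 f hf => (h1 f hf).trans (h2 f hf)⟩⟩

def algRel [TopologicalSpace X] (A : Subalgebra ℝ C(X, ℝ)) (a b : X) : Prop :=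
  ∀ f ∈ A, f a = f b

def IsBoltFrom (R S : X → X → Prop) {n : ℕ} (x : Fin n → X) : Prop :=
  ∀ i : ℕ, ∀ h : i + 1 < n,
    x ⟨i, by omega⟩ ≠ x ⟨i + 1, h⟩ ∧
    (if i % 2 = 0 then R else S) (x ⟨i, by omega⟩) (x ⟨i + 1, h⟩)

def IsBolt (R S : X → X → Prop) {n : ℕ} (x : Fin n → X) : Prop :=
  IsBoltFrom R S x ∨ IsBoltFrom S R x

def IsClosedBolt (R S : X → X → Prop) {n : ℕ} (x : Fin n → X) : Prop :=
  ∃ hn : 0 < n, IsBolt R S (Fin.snoc x (x ⟨0, hn⟩))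

def IsInfBoltFrom (R S : X → X → Prop) (x : ℕ → X) : Prop :=
  ∀ i : ℕ, x i ≠ x (i + 1) ∧ (if i % 2 = 0 then R else S) (x i) (x (i + 1))

def IsInfBolt (R S : X → X → Prop) (x : ℕ → X) : Prop :=
  IsInfBoltFrom R S x ∨ IsInfBoltFrom S R x

def sumSet [TopologicalSpace X] (A₁ A₂ : Subalgebra ℝ C(X, ℝ)) : Set C(X, ℝ) :=
  {u | ∃ v₁ ∈ A₁, ∃ v₂ ∈ A₂, u = v₁ + v₂}

def ExtremalFin [TopologicalSpace X] [CompactSpace X] (w : C(X, ℝ)) {n : ℕ} (x : Fin n → X) : Prop :=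
  (∀ i, w (x i) = (-1 : ℝ) ^ (i : ℕ) * ‖w‖) ∨ (∀ i, w (x i) = (-1 : ℝ) ^ ((i : ℕ) + 1) * ‖w‖)

def ExtremalSeq [TopologicalSpace X] [CompactSpace X] (w : C(X, ℝ)) (x : ℕ → X) : Prop :=
  (∀ i, w (x i) = (-1 : ℝ) ^ i * ‖w‖) ∨ (∀ i, w (x i) = (-1 : ℝ) ^ (i + 1) * ‖w‖)

noncomputable def ssint {α : Type*} [MeasurableSpace α] (μ : MeasureTheory.SignedMeasure α) (g : α → ℝ) : ℝ :=
  (∫ a, g a ∂μ.toJordanDecomposition.posPart) - ∫ a, g a ∂μ.toJordanDecomposition.negPart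

def measSupport {α : Type*} [TopologicalSpace α] [MeasurableSpace α] (m : MeasureTheory.Measure α) : Set α :=
  {x | ∀ U : Set α, IsOpen U → x ∈ U → 0 < m U}

set_option linter.unusedSectionVars false
set_option linter.unusedVariables false
section HMSAux

open Metric Set Filter Topology

variable {A : Type*} {B : Type*} [MetricSpace A] [TopologicalSpace B]

/-- Excess relation: the fiber of `z` is within `ε` of the fiber of `y`. -/
def hmsExc (f : A → B) (y z : B) (ε : ℝ) : Prop :=
  f ⁻¹' {z} ⊆ Metric.thickening ε (f ⁻¹' {y})

/-- Touching relation: the fibers of `y` and `z` come within `ε` of each other. -/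
def hmsTch (f : A → B) (y z : B) (ε : ℝ) : Prop :=
  ∃ p ∈ f ⁻¹' {y}, ∃ q ∈ f ⁻¹' {z}, dist p q < ε

theorem hmsExc.mono {f : A → B} {y z : B} {ε ε' : ℝ} (h : ε ≤ ε') (H : hmsExc f y z ε) :
    hmsExc f y z ε' := fun x hx => Metric.thickening_mono h _ (H hx)

theorem hmsTch.mono {f : A → B} {y z : B} {ε ε' : ℝ} (h : ε ≤ ε') :
    hmsTch f y z ε → hmsTch f y z ε' :=
  fun ⟨p, hp, q, hq, hd⟩ => ⟨p, hp, q, hq, lt_of_lt_of_le hd h⟩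

theorem hmsTch.symm {f : A → B} {y z : B} {ε : ℝ} : hmsTch f y z ε → hmsTch f z y ε :=
  fun ⟨p, hp, q, hq, hd⟩ => ⟨q, hq, p, hp, by rwa [dist_comm]⟩

theorem hmsExc.tch {f : A → B} {y z : B} {ε : ℝ} (hz : (f ⁻¹' {z}).Nonempty)
    (H : hmsExc f y z ε) : hmsTch f y z ε := by
  obtain ⟨q, hq⟩ := hz
  obtain ⟨p, hp, hd⟩ := Metric.mem_thickening_iff.1 (H hq)
  exact ⟨p, hp, q, hq, by rwa [dist_comm]⟩

theorem hmsExc.trans {f : A → B} {y z v : B} {α β : ℝ} (h1 : hmsExc f y z α)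
    (h2 : hmsExc f z v β) : hmsExc f y v (α + β) := by
  intro x hx
  obtain ⟨b, hb, hdb⟩ := Metric.mem_thickening_iff.1 (h2 hx)
  obtain ⟨a, ha, hda⟩ := Metric.mem_thickening_iff.1 (h1 hb)
  exact Metric.mem_thickening_iff.2 ⟨a, ha, (dist_triangle x b a).trans_lt (by linarith)⟩

theorem hmsExc.tch_of_pair {f : A → B} {y y' z : B} {α α' : ℝ} (h1 : hmsExc f y z α)
    (h2 : hmsExc f y' z α') (hz : (f ⁻¹' {z}).Nonempty) : hmsTch f y y' (α + α') := by
  obtain ⟨q, hq⟩ := hz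
  obtain ⟨a, ha, hda⟩ := Metric.mem_thickening_iff.1 (h1 hq)
  obtain ⟨a', ha', hda'⟩ := Metric.mem_thickening_iff.1 (h2 hq)
  refine ⟨a, ha, a', ha', (dist_triangle a q a').trans_lt ?_⟩
  rw [dist_comm a q]; linarith

/-- Key consequence of closedness: every fiber touching a small ball around the (compact)
fiber of `y` is entirely contained in any given open set around the fiber of `y`. -/
theorem hms_keyA {f : A → B} (hc : Continuous f) (hcl : IsClosedMap f) {y : B}
    (hK : IsCompact (f ⁻¹' {y})) {U : Set A} (hU : IsOpen U) (hKU : f ⁻¹' {y} ⊆ U) :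
    ∃ δ > 0, ∀ z, hmsTch f y z δ → f ⁻¹' {z} ⊆ U := by
  by_contra hcon
  push_neg at hcon
  have h' : ∀ n : ℕ, ∃ z, hmsTch f y z (1 / ((n : ℝ) + 1)) ∧ ∃ x ∈ f ⁻¹' {z}, x ∉ U := by
    intro n
    obtain ⟨z, hz1, hz2⟩ := hcon (1 / ((n : ℝ) + 1)) (by positivity)
    exact ⟨z, hz1, Set.not_subset.1 hz2⟩
  choose z hz hbx using h'
  choose b hb1 hb2 using hbx
  choose p hp q hq hpq using hz
  obtain ⟨a, haK, φ, hφ, hφa⟩ := hK.tendsto_subseq hp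
  have hqa : Filter.Tendsto (fun k => q (φ k)) Filter.atTop (𝓝 a) := by
    rw [tendsto_iff_dist_tendsto_zero]
    apply squeeze_zero (fun _ => dist_nonneg)
      (g := fun k => 1 / ((φ k : ℝ) + 1) + dist (p (φ k)) a)
    · intro k
      have h1 := hpq (φ k)
      rw [dist_comm] at h1
      calc dist (q (φ k)) a ≤ dist (q (φ k)) (p (φ k)) + dist (p (φ k)) a := dist_triangle _ _ _
        _ ≤ 1 / ((φ k : ℝ) + 1) + dist (p (φ k)) a := by linarith
    · have h1 : Filter.Tendsto (fun k => 1 / ((φ k : ℝ) + 1)) Filter.atTop (𝓝 0) :=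
        tendsto_one_div_add_atTop_nhds_zero_nat.comp hφ.tendsto_atTop
      have h2 : Filter.Tendsto (fun k => dist (p (φ k)) a) Filter.atTop (𝓝 0) :=
        tendsto_iff_dist_tendsto_zero.1 hφa
      simpa using h1.add h2
  have hbU : Set.range b ⊆ Uᶜ := Set.range_subset_iff.2 hb2
  have hCU : closure (Set.range b) ⊆ Uᶜ := closure_minimal hbU hU.isClosed_compl
  have hcls : IsClosed (f '' closure (Set.range b)) := hcl _ isClosed_closure
  have hyim : y ∈ f '' closure (Set.range b) := by
    have h1 : y ∈ closure (f '' Set.range b) := by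
      rw [_root_.mem_closure_iff]
      intro o ho hyo
      have haO : a ∈ f ⁻¹' o := by
        have hay : f a = y := haK
        simp only [Set.mem_preimage, hay]; exact hyo
      obtain ⟨k, hk⟩ := (hqa.eventually ((ho.preimage hc).eventually_mem haO)).exists
      refine ⟨f (b (φ k)), ?_, Set.mem_image_of_mem f (Set.mem_range_self _)⟩
      have hqz : f (q (φ k)) = z (φ k) := hq (φ k)
      have hbz : f (b (φ k)) = z (φ k) := hb1 (φ k)
      rw [hbz, ← hqz]; exact hk
    exact closure_minimal (Set.image_mono subset_closure) hcls h1
  obtain ⟨c, hcC, hcy⟩ := hyim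
  exact hCU hcC (hKU (by simp [Set.mem_preimage, hcy]))


/-- A perfect (closed, compact fibers) continuous surjection from a metric space has
metrizable target. -/
theorem hms_perfect (f : A → B) (hc : Continuous f) (hs : Function.Surjective f)
    (hcl : IsClosedMap f) (hcpt : ∀ y, IsCompact (f ⁻¹' {y})) :
    TopologicalSpace.MetrizableSpace B := by
  classical
  have hfib : ∀ y : B, (f ⁻¹' {y}).Nonempty := fun y => by
    obtain ⟨x, hx⟩ := hs y; exact ⟨x, hx⟩
  -- T1
  haveI hT1 : T1Space B := ⟨fun y => by
    obtain ⟨x, hx⟩ := hs y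
    have h := hcl {x} isClosed_singleton
    rwa [Set.image_singleton, hx] at h⟩
  -- the δ-function from the key lemma
  have hA' : ∀ (y : B) (ε : ℝ), ∃ δ : ℝ, 0 < δ ∧
      (0 < ε → δ ≤ ε ∧ ∀ z, hmsTch f y z δ → hmsExc f y z ε) := by
    intro y ε
    by_cases hε : 0 < ε
    · obtain ⟨δ, hδ, hprop⟩ := hms_keyA hc hcl (hcpt y) Metric.isOpen_thickening
        (Metric.self_subset_thickening hε (f ⁻¹' {y}))
      exact ⟨min δ ε, lt_min hδ hε, fun _ =>
        ⟨min_le_right _ _, fun z hz => hprop z (hz.mono (min_le_left _ _))⟩⟩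
    · exact ⟨1, one_pos, fun h => absurd h hε⟩
  choose Df hDpos hDrest using hA'
  have hDle : ∀ (y : B) (ε : ℝ), 0 < ε → Df y ε ≤ ε := fun y ε h => (hDrest y ε h).1
  have hDspec : ∀ (y : B) (ε : ℝ), 0 < ε → ∀ z, hmsTch f y z (Df y ε) → hmsExc f y z ε :=
    fun y ε h => (hDrest y ε h).2
  -- radius recursion
  let a : ℕ → B → ℝ := fun n y =>
    Nat.rec (motive := fun _ => ℝ) 1 (fun _ r => 16⁻¹ * Df y (4⁻¹ * Df y (r / 4))) n
  have haS : ∀ n y, a (n + 1) y = 16⁻¹ * Df y (4⁻¹ * Df y (a n y / 4)) := fun n y => rfl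
  have ha0 : ∀ y, a 0 y = 1 := fun y => rfl
  have hapos : ∀ n y, 0 < a n y := by
    intro n y
    induction n with
    | zero => rw [ha0]; exact one_pos
    | succ n ih => rw [haS]; have := hDpos y (4⁻¹ * Df y (a n y / 4)); positivity
  have hastep : ∀ n y, a (n + 1) y ≤ a n y / 256 := by
    intro n y
    have h1 : 0 < a n y / 4 := by have := hapos n y; positivity
    have h2 : Df y (a n y / 4) ≤ a n y / 4 := hDle _ _ h1
    have h3 : 0 < 4⁻¹ * Df y (a n y / 4) := by have := hDpos y (a n y / 4); positivity
    have h4 : Df y (4⁻¹ * Df y (a n y / 4)) ≤ 4⁻¹ * Df y (a n y / 4) := hDle _ _ h3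
    rw [haS]
    nlinarith [hDpos y (a n y / 4)]
  have hamono : ∀ n y, a (n + 1) y ≤ a n y := fun n y =>
    (hastep n y).trans (by have := hapos n y; linarith)
  have haanti : ∀ y, Antitone (fun n => a n y) := fun y => antitone_nat_of_succ_le (fun n => hamono n y)
  have habound : ∀ n y, a n y ≤ (2⁻¹ : ℝ) ^ n := by
    intro n y
    induction n with
    | zero => rw [ha0]; norm_num
    | succ n ih =>
      have h1 := hastep n y
      have h2 : a n y / 256 ≤ a n y / 2 := by have := hapos n y; linarith
      calc a (n + 1) y ≤ a n y / 2 := h1.trans h2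
        _ ≤ (2⁻¹ : ℝ) ^ n / 2 := by linarith
        _ = (2⁻¹ : ℝ) ^ (n + 1) := by ring
  -- the basic sets
  let N : ℕ → B → Set B := fun n y => {z | hmsExc f y z (a n y)}
  have hNopen : ∀ n y, IsOpen (N n y) := by
    intro n y
    have heq : N n y = (f '' (Metric.thickening (a n y) (f ⁻¹' {y}))ᶜ)ᶜ := by
      ext w
      simp only [N, Set.mem_setOf_eq, Set.mem_compl_iff, Set.mem_image, not_exists, not_and,
        hmsExc, Set.subset_def, Set.mem_preimage, Set.mem_singleton_iff]
      constructor
      · intro h x hx hfx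
        exact hx (h x hfx)
      · intro h x hfx
        by_contra hcon
        exact h x hcon hfx
    rw [heq]
    exact (hcl _ Metric.isOpen_thickening.isClosed_compl).isOpen_compl
  have hNself : ∀ n y, y ∈ N n y := fun n y =>
    fun x hx => Metric.self_subset_thickening (hapos n y) _ hx
  have hNmono : ∀ n y, N (n + 1) y ⊆ N n y := fun n y z hz => hz.mono (hamono n y)
  have hNanti : ∀ (m n : ℕ) y, m ≤ n → N n y ⊆ N m y := by
    intro m n y h z hz
    exact hz.mono (haanti y h)
  -- star refinement for pairs
  have hstar : ∀ n (y₁ y₂ : B), a (n + 1) y₂ ≤ a (n + 1) y₁ →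
      ∀ z, z ∈ N (n + 1) y₁ → z ∈ N (n + 1) y₂ → N (n + 1) y₂ ⊆ N n y₁ := by
    intro n y₁ y₂ hle z hz1 hz2 v hv
    have htch : hmsTch f y₁ y₂ (a (n + 1) y₁ + a (n + 1) y₂) :=
      hmsExc.tch_of_pair hz1 hz2 (hfib z)
    have hε₂pos : 0 < Df y₁ (a n y₁ / 4) := hDpos _ _
    have hε₁pos : 0 < 4⁻¹ * Df y₁ (a n y₁ / 4) := by positivity
    have hDf1pos : 0 < Df y₁ (4⁻¹ * Df y₁ (a n y₁ / 4)) := hDpos _ _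
    have h2 : a (n + 1) y₁ + a (n + 1) y₂ ≤ Df y₁ (4⁻¹ * Df y₁ (a n y₁ / 4)) := by
      have h3 := haS n y₁
      nlinarith [hle, hDf1pos]
    have hexc12 : hmsExc f y₁ y₂ (4⁻¹ * Df y₁ (a n y₁ / 4)) :=
      hDspec y₁ _ hε₁pos y₂ (htch.mono h2)
    have hexcv : hmsExc f y₁ v (4⁻¹ * Df y₁ (a n y₁ / 4) + a (n + 1) y₂) :=
      hexc12.trans hv
    refine hexcv.mono ?_
    have h5 : Df y₁ (a n y₁ / 4) ≤ a n y₁ / 4 := hDle _ _ (by have := hapos n y₁; positivity)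
    have h6 : a (n + 1) y₂ ≤ a (n + 1) y₁ := hle
    have h7 := haS n y₁
    have h8 : Df y₁ (4⁻¹ * Df y₁ (a n y₁ / 4)) ≤ 4⁻¹ * Df y₁ (a n y₁ / 4) := hDle _ _ hε₁pos
    nlinarith [hapos n y₁]
  -- development property
  have hdev : ∀ (y : B) (s : Set B), IsOpen s → y ∈ s → ∃ n, ∀ w, y ∈ N n w → N n w ⊆ s := by
    intro y s hso hys
    have hfU : f ⁻¹' {y} ⊆ f ⁻¹' s := fun x hx => by
      simp only [Set.mem_preimage, Set.mem_singleton_iff] at hx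
      simp [Set.mem_preimage, hx, hys]
    obtain ⟨ε₀, hε₀, hthick⟩ := (hcpt y).exists_thickening_subset_open (hso.preimage hc) hfU
    have hδpos : 0 < Df y (ε₀ / 2) := hDpos _ _
    obtain ⟨n, hn⟩ : ∃ n : ℕ, (2⁻¹ : ℝ) ^ n < min (Df y (ε₀ / 2)) (ε₀ / 2) :=
      exists_pow_lt_of_lt_one (lt_min hδpos (by linarith)) (by norm_num)
    refine ⟨n, fun w hyw v hv => ?_⟩
    have h1 : hmsTch f w y (a n w) := hyw.tch (hfib y)
    have h2 : hmsTch f y w (Df y (ε₀ / 2)) :=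
      (h1.symm).mono (le_of_lt ((habound n w).trans_lt (hn.trans_le (min_le_left _ _))))
    have h3 : hmsExc f y w (ε₀ / 2) := hDspec y _ (by linarith) w h2
    have h4 : hmsExc f y v (ε₀ / 2 + a n w) := h3.trans hv
    have h5 : hmsExc f y v ε₀ := h4.mono (by
      have := (habound n w).trans_lt (hn.trans_le (min_le_right _ _))
      linarith)
    obtain ⟨x, hx⟩ := hfib v
    have hxs : x ∈ f ⁻¹' s := hthick (h5 hx)
    simp only [Set.mem_preimage, Set.mem_singleton_iff] at hx hxs
    rwa [hx] at hxs
  -- the entourages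
  let Uent : ℕ → Set (B × B) := fun n => ⋃ y, (N n y) ×ˢ (N n y)
  have hUmem : ∀ n (u v : B), (u, v) ∈ Uent n ↔ ∃ y, u ∈ N n y ∧ v ∈ N n y := by
    intro n u v
    simp [Uent, Set.mem_iUnion]
  have hUanti : ∀ m n, m ≤ n → Uent n ⊆ Uent m := by
    rintro m n h ⟨u, v⟩ huv
    rw [hUmem] at huv ⊢
    obtain ⟨y, h1, h2⟩ := huv
    exact ⟨y, hNanti m n y h h1, hNanti m n y h h2⟩
  have hdir : Directed (· ≥ ·) Uent := fun m n =>
    ⟨max m n, hUanti m (max m n) (le_max_left _ _), hUanti n (max m n) (le_max_right _ _)⟩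
  let F : Filter (B × B) := ⨅ n, 𝓟 (Uent n)
  have hbasis : F.HasBasis (fun _ : ℕ => True) Uent := Filter.hasBasis_iInf_principal hdir
  -- the uniform space core
  have hcomp : ∀ n, SetRel.comp (Uent (n + 1)) (Uent (n + 1)) ⊆ Uent n := by
    intro n
    rintro ⟨u, w⟩ ⟨v, huv, hvw⟩
    obtain ⟨y₁, hu1, hv1⟩ := (hUmem (n + 1) u v).1 huv
    obtain ⟨y₂, hv2, hw2⟩ := (hUmem (n + 1) v w).1 hvw
    refine (hUmem n u w).2 ?_
    rcases le_total (a (n + 1) y₂) (a (n + 1) y₁) with hle | hle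
    · exact ⟨y₁, hNmono n y₁ hu1, hstar n y₁ y₂ hle v hv1 hv2 hw2⟩
    · exact ⟨y₂, hstar n y₂ y₁ hle v hv2 hv1 hu1, hNmono n y₂ hw2⟩
  let core : UniformSpace.Core B := UniformSpace.Core.mk' F
    (by
      intro r hr x
      obtain ⟨n, -, hsub⟩ := hbasis.mem_iff.1 hr
      exact hsub ((hUmem n x x).2 ⟨x, hNself n x, hNself n x⟩))
    (by
      intro r hr
      obtain ⟨n, -, hsub⟩ := hbasis.mem_iff.1 hr
      refine hbasis.mem_iff.2 ⟨n, trivial, ?_⟩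
      rintro ⟨u, v⟩ huv
      have : (v, u) ∈ Uent n := by
        rw [hUmem] at huv ⊢
        obtain ⟨y, h1, h2⟩ := huv
        exact ⟨y, h2, h1⟩
      exact hsub this)
    (by
      intro r hr
      obtain ⟨n, -, hsub⟩ := hbasis.mem_iff.1 hr
      exact ⟨Uent (n + 1), hbasis.mem_iff.2 ⟨n + 1, trivial, subset_rfl⟩,
        (hcomp n).trans hsub⟩)
  -- topology agreement
  have hsteq : ∀ (x : B) (n : ℕ), {v | (x, v) ∈ Uent n} = ⋃ w ∈ {w | x ∈ N n w}, N n w := by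
    intro x n
    ext v
    simp only [Set.mem_setOf_eq, Set.mem_iUnion, exists_prop]
    rw [hUmem]
  have htopeq : ‹TopologicalSpace B› = core.toTopologicalSpace := by
    refine TopologicalSpace.ext_nhds fun x => ?_
    rw [core.nhds_toTopologicalSpace]
    apply le_antisymm
    · refine fun s hs => ?_
      rw [Filter.mem_comap] at hs
      obtain ⟨t, htF, hts⟩ := hs
      obtain ⟨n, -, hsub⟩ := hbasis.mem_iff.1 htF
      have hsub2 : {v | (x, v) ∈ Uent n} ⊆ s := fun v hv => hts (hsub hv)
      have hopen : IsOpen {v | (x, v) ∈ Uent n} := by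
        rw [hsteq]
        exact isOpen_biUnion (fun w _ => hNopen n w)
      have hxmem : x ∈ {v | (x, v) ∈ Uent n} := (hUmem n x x).2 ⟨x, hNself n x, hNself n x⟩
      exact Filter.mem_of_superset (hopen.mem_nhds hxmem) hsub2
    · refine fun s hs => ?_
      obtain ⟨o, hos, hoo, hxo⟩ := mem_nhds_iff.1 hs
      obtain ⟨n, hn⟩ := hdev x o hoo hxo
      refine Filter.mem_comap.2 ⟨Uent n, hbasis.mem_iff.2 ⟨n, trivial, subset_rfl⟩, ?_⟩
      intro v hv
      rw [Set.mem_preimage] at hv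
      obtain ⟨w, hw1, hw2⟩ := (hUmem n x v).1 hv
      exact hos (hn w hw1 hw2)
  letI uB : UniformSpace B := UniformSpace.ofCoreEq core _ htopeq
  haveI : (uniformity B).IsCountablyGenerated := hbasis.isCountablyGenerated
  exact UniformSpace.metrizableSpace

theorem hms_main {A : Type*} {B : Type*} [MetricSpace A] [TopologicalSpace B] (f : A → B)
    (hc : Continuous f) (hs : Function.Surjective f) (hcl : IsClosedMap f)
    (hb : ∀ y : B, IsCompact (frontier (f ⁻¹' {y}))) :
    TopologicalSpace.MetrizableSpace B := by
  classical
  haveI hT1 : T1Space B := ⟨fun y => by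
    obtain ⟨x, hx⟩ := hs y
    have h := hcl {x} isClosed_singleton
    rwa [Set.image_singleton, hx] at h⟩
  set g := Function.surjInv hs with hgdef
  have hgf : ∀ y, f (g y) = y := fun y => Function.surjInv_eq hs y
  set X₁ : Set A := (⋃ y, frontier (f ⁻¹' {y})) ∪ Set.range g with hX₁
  set S : Set A := closure X₁ with hSdef
  have hSclosed : IsClosed S := isClosed_closure
  -- the key set computation
  have hkey : ∀ y, S ∩ f ⁻¹' {y} ⊆ frontier (f ⁻¹' {y}) ∪ {g y} := by
    intro y x hx
    obtain ⟨hxS, hxf⟩ := hx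
    by_cases hfr : x ∈ frontier (f ⁻¹' {y})
    · exact Or.inl hfr
    right
    have hxint : x ∈ interior (f ⁻¹' {y}) := by
      by_contra h
      exact hfr ⟨subset_closure hxf, h⟩
    have hsub : X₁ ∩ interior (f ⁻¹' {y}) ⊆ {g y} := by
      rintro u ⟨hu1, hu2⟩
      rcases hu1 with hu1 | ⟨w, rfl⟩
      · obtain ⟨w, hw⟩ := Set.mem_iUnion.1 hu1
        have hucl : u ∈ closure (f ⁻¹' {w}) := frontier_subset_closure hw
        obtain ⟨v, hv1, hv2⟩ :=
          _root_.mem_closure_iff.1 hucl _ isOpen_interior hu2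
        have hvy : f v = y := by
          have := interior_subset hv1
          simpa [Set.mem_preimage] using this
        have hvw : f v = w := hv2
        have hwy : w = y := by rw [← hvw, hvy]
        subst hwy
        exact absurd hu2 hw.2
      · have h1 : f (g w) = y := by
          have := interior_subset hu2
          simpa [Set.mem_preimage] using this
        have h2 : w = y := by rw [← hgf w, h1]
        rw [h2]
        rfl
    have hxcl : x ∈ closure ({g y} : Set A) := by
      rw [_root_.mem_closure_iff]
      intro o ho hxo
      obtain ⟨v, hv1, hv2⟩ := _root_.mem_closure_iff.1 hxS (o ∩ interior (f ⁻¹' {y}))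
        (ho.inter isOpen_interior) ⟨hxo, hxint⟩
      exact ⟨v, hv1.1, hsub ⟨hv2, hv1.2⟩⟩
    rwa [closure_singleton] at hxcl
  -- restriction of f to S
  let f' : S → B := fun p => f p.1
  have hfc : Continuous f' := hc.comp continuous_subtype_val
  have hfs : Function.Surjective f' := fun y =>
    ⟨⟨g y, subset_closure (Or.inr ⟨y, rfl⟩)⟩, hgf y⟩
  have hval : IsClosedMap (Subtype.val : S → A) :=
    hSclosed.isClosedEmbedding_subtypeVal.isClosedMap
  have hfcl : IsClosedMap f' := by
    intro C hC
    have h1 : f' '' C = f '' (Subtype.val '' C) := by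
      rw [Set.image_image]
    rw [h1]
    exact hcl _ (hval _ hC)
  have hfcpt : ∀ y, IsCompact (f' ⁻¹' {y}) := by
    intro y
    have hfyc : IsClosed (f ⁻¹' {y}) := (isClosed_singleton).preimage hc
    have hKcpt : IsCompact (frontier (f ⁻¹' {y}) ∪ {g y}) := (hb y).union isCompact_singleton
    have him : Subtype.val '' (f' ⁻¹' {y} : Set S) = S ∩ f ⁻¹' {y} := by
      ext x
      simp only [Set.mem_image, Set.mem_preimage, Set.mem_singleton_iff, Set.mem_inter_iff]
      constructor
      · rintro ⟨⟨x', hx'⟩, h1, rfl⟩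
        exact ⟨hx', h1⟩
      · rintro ⟨h1, h2⟩
        exact ⟨⟨x, h1⟩, h2, rfl⟩
    rw [Subtype.isCompact_iff, him]
    exact IsCompact.of_isClosed_subset hKcpt (hSclosed.inter hfyc) (hkey y)
  exact hms_perfect f' hfc hfs hfcl hfcpt

end HMSAux

theorem stmt2 [MetricSpace X] {Y : Type*} [TopologicalSpace Y] (π : X → Y)
    (hc : Continuous π) (hs : Function.Surjective π) (hcl : IsClosedMap π)
    (hb : ∀ y : Y, IsCompact (frontier (π ⁻¹' {y}))) :
    TopologicalSpace.MetrizableSpace Y :=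
  hms_main π hc hs hcl hb
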